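/- Let k be a field and q ∈ k^×. In A = O_q(M_{m,n}(k)), every monomial in the generators X_{ij} is congruent modulo the ideal I_1 to a k-linear combination of monomials X_{i_1 j_1} X_{i_2 j_2} ⋯ X_{i_l j_l} with i_1 ≥ i_2 ≥ ⋯ ≥ i_l and j_1 ≤ j_2 ≤ ⋯ ≤ j_l (allowing the empty monomial 1). Consequently, the cosets of these ordered monomials span A/I_1 as a k-vector space. -/

import Mathlib

open scoped TensorProduct

noncomputable section

/-- Defining relations of the coordinate ring `O_q(k^n)` of quantum affine `n`-space:
`y_i y_j = q y_j y_i` for `i < j`. -/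
inductive AffRel (k : Type) [Field k] (q : k) (n : ℕ) :
    FreeAlgebra k (Fin n) → FreeAlgebra k (Fin n) → Prop
  | rel : ∀ {i j : Fin n}, i < j →
      AffRel k q n (FreeAlgebra.ι k i * FreeAlgebra.ι k j)
        (q • (FreeAlgebra.ι k j * FreeAlgebra.ι k i))

/-- The coordinate ring `O_q(k^n)` of quantum affine `n`-space. -/
abbrev QAff (k : Type) [Field k] (q : k) (n : ℕ) : Type := RingQuot (AffRel k q n)

/-- The canonical generators `y_1, …, y_n` of `O_q(k^n)`. -/
def affGen (k : Type) [Field k] (q : k) (n : ℕ) (i : Fin n) : QAff k q n :=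
  RingQuot.mkAlgHom k (AffRel k q n) (FreeAlgebra.ι k i)

/-- Defining relations of the coordinate ring `O_q(M_{m,n}(k))` of quantum `m × n` matrices. -/
inductive MatRel (k : Type) [Field k] (q : k) (m n : ℕ) :
    FreeAlgebra k (Fin m × Fin n) → FreeAlgebra k (Fin m × Fin n) → Prop
  | col : ∀ {i l : Fin m} {j : Fin n}, i < l →
      MatRel k q m n (FreeAlgebra.ι k (i, j) * FreeAlgebra.ι k (l, j))
        (q • (FreeAlgebra.ι k (l, j) * FreeAlgebra.ι k (i, j)))
  | row : ∀ {i : Fin m} {j s : Fin n}, j < s →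
      MatRel k q m n (FreeAlgebra.ι k (i, j) * FreeAlgebra.ι k (i, s))
        (q • (FreeAlgebra.ι k (i, s) * FreeAlgebra.ι k (i, j)))
  | comm : ∀ {i l : Fin m} {j s : Fin n}, i < l → j < s →
      MatRel k q m n (FreeAlgebra.ι k (i, s) * FreeAlgebra.ι k (l, j))
        (FreeAlgebra.ι k (l, j) * FreeAlgebra.ι k (i, s))
  | mixed : ∀ {i l : Fin m} {j s : Fin n}, i < l → j < s →
      MatRel k q m n
        (FreeAlgebra.ι k (i, j) * FreeAlgebra.ι k (l, s) -
          FreeAlgebra.ι k (l, s) * FreeAlgebra.ι k (i, j))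
        ((q - q⁻¹) • (FreeAlgebra.ι k (i, s) * FreeAlgebra.ι k (l, j)))

/-- The coordinate ring `O_q(M_{m,n}(k))` of quantum `m × n` matrices. -/
abbrev QMat (k : Type) [Field k] (q : k) (m n : ℕ) : Type := RingQuot (MatRel k q m n)

/-- The canonical generators `X i j` of `O_q(M_{m,n}(k))`. -/
def X (k : Type) [Field k] (q : k) (m n : ℕ) (i : Fin m) (j : Fin n) : QMat k q m n :=
  RingQuot.mkAlgHom k (MatRel k q m n) (FreeAlgebra.ι k (i, j))

/-- The two-sided ideal `I₁` of `O_q(M_{m,n}(k))` generated by the `2 × 2` quantum minors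
`X_{ij} X_{ls} - q X_{is} X_{lj}` for `i < l`, `j < s`. -/
def I₁ (k : Type) [Field k] (q : k) (m n : ℕ) : TwoSidedIdeal (QMat k q m n) :=
  TwoSidedIdeal.span
    { a | ∃ (i l : Fin m) (j s : Fin n), i < l ∧ j < s ∧
        a = X k q m n i j * X k q m n l s - q • (X k q m n i s * X k q m n l j) }

/-- The monomial `X_{i₁j₁} X_{i₂j₂} ⋯ X_{iₗjₗ}` associated to a list of index pairs. -/
def matMono (k : Type) [Field k] (q : k) (m n : ℕ) (L : List (Fin m × Fin n)) :
    QMat k q m n :=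
  (L.map fun p => X k q m n p.1 p.2).prod

/-- A list of index pairs is *ordered* if the row indices are non-increasing and the column
indices are non-decreasing, i.e. `i₁ ≥ i₂ ≥ ⋯ ≥ iₗ` and `j₁ ≤ j₂ ≤ ⋯ ≤ jₗ`. -/
def OrderedIdx {m n : ℕ} (L : List (Fin m × Fin n)) : Prop :=
  L.Chain' fun p p' => p'.1 ≤ p.1 ∧ p.2 ≤ p'.2


namespace QMX
open List

variable {α β : Type*}

/-- generalized inversion count -/
def inv2 (f : α → α → Bool) : List α → ℕ
  | [] => 0
  | p :: t => t.countP (f p) + inv2 f t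

lemma inv2_append (f : α → α → Bool) (A B : List α) :
    inv2 f (A ++ B) = inv2 f A + (A.map fun p => B.countP (f p)).sum + inv2 f B := by
  induction A with
  | nil => simp [inv2]
  | cons a A ih => simp [inv2, ih, List.countP_append]; ring

lemma inv2_lt_sq (f : α → α → Bool) : ∀ L : List α, L ≠ [] → inv2 f L < L.length ^ 2
  | [], h => absurd rfl h
  | a :: t, _ => by
    rcases eq_or_ne t [] with rfl | ht
    · simp [inv2]
    · have h1 := inv2_lt_sq f t ht
      have h2 : t.countP (f a) ≤ t.length := t.countP_le_length
      simp only [inv2, List.length_cons]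
      nlinarith [h1, h2]

lemma inv2_ctx (g : α → β) (r : β → β → Bool) (M M' : List α)
    (h : (M.map g).Perm (M'.map g)) (A B : List α) :
    inv2 (fun p p' => r (g p) (g p')) (A ++ M ++ B) +
      inv2 (fun p p' => r (g p) (g p')) M'
    = inv2 (fun p p' => r (g p) (g p')) (A ++ M' ++ B) +
      inv2 (fun p p' => r (g p) (g p')) M := by
  set f : α → α → Bool := fun p p' => r (g p) (g p') with hf
  have hcount : ∀ p (Z : List α), Z.countP (f p) = (Z.map g).countP (r (g p)) := by
    intro p Z
    rw [List.countP_map]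
    rfl
  have h1 : ∀ p, M.countP (f p) = M'.countP (f p) := by
    intro p
    rw [hcount, hcount, h.countP_eq]
  have h2 : (M.map fun p => B.countP (f p)).sum = (M'.map fun p => B.countP (f p)).sum := by
    have e : ∀ Z : List α, (Z.map fun p => B.countP (f p)).sum
        = ((Z.map g).map fun b => (B.map g).countP (r b)).sum := by
      intro Z
      rw [List.map_map]
      congr 1
      apply List.map_congr_left
      intro p _
      simp [hcount]
    rw [e, e]
    exact (h.map _).sum_eq
  have eA : ∀ Z : List α, inv2 f (A ++ Z ++ B)
      = inv2 f A + (A.map fun p => Z.countP (f p)).sum + (A.map fun p => B.countP (f p)).sum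
        + (inv2 f Z + (Z.map fun p => B.countP (f p)).sum + inv2 f B) := by
    intro Z
    rw [List.append_assoc, inv2_append, inv2_append]
    simp only [List.countP_append]
    have : (A.map fun p => Z.countP (f p) + B.countP (f p)).sum
        = (A.map fun p => Z.countP (f p)).sum + (A.map fun p => B.countP (f p)).sum := by
      rw [← List.sum_map_add]
    omega
  rw [eA, eA]
  have h3 : (A.map fun p => M.countP (f p)).sum = (A.map fun p => M'.countP (f p)).sum := by
    congr 1
    exact List.map_congr_left fun p _ => h1 p
  omega

variable {m n : ℕ}

def rI (L : List (Fin m × Fin n)) : ℕ :=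
  inv2 (fun p p' => decide (p.1 < p'.1)) L

def cI (L : List (Fin m × Fin n)) : ℕ :=
  inv2 (fun p p' => decide (p'.2 < p.2)) L

def Phi (L : List (Fin m × Fin n)) : ℕ := cI L * L.length ^ 2 + rI L

lemma rI_ctx (M M' A B : List (Fin m × Fin n))
    (h : (M.map Prod.fst).Perm (M'.map Prod.fst)) :
    rI (A ++ M ++ B) + rI M' = rI (A ++ M' ++ B) + rI M :=
  inv2_ctx Prod.fst (fun a b => decide (a < b)) M M' h A B

lemma cI_ctx (M M' A B : List (Fin m × Fin n))
    (h : (M.map Prod.snd).Perm (M'.map Prod.snd)) :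
    cI (A ++ M ++ B) + cI M' = cI (A ++ M' ++ B) + cI M :=
  inv2_ctx Prod.snd (fun a b => decide (b < a)) M M' h A B

lemma rI_pair (a b : Fin m × Fin n) : rI [a, b] = if a.1 < b.1 then 1 else 0 := by
  by_cases h : a.1 < b.1 <;> simp [rI, inv2, List.countP_cons, List.countP_nil, h]

lemma cI_pair (a b : Fin m × Fin n) : cI [a, b] = if b.2 < a.2 then 1 else 0 := by
  by_cases h : b.2 < a.2 <;> simp [cI, inv2, List.countP_cons, List.countP_nil, h]

lemma phi_lt (A B : List (Fin m × Fin n)) (a b a' b' : Fin m × Fin n)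
    (hr : ([a, b].map Prod.fst).Perm ([a', b'].map Prod.fst))
    (hc : ([a, b].map Prod.snd).Perm ([a', b'].map Prod.snd))
    (hlt : cI [a', b'] < cI [a, b] ∨ (cI [a', b'] = cI [a, b] ∧ rI [a', b'] < rI [a, b])) :
    Phi (A ++ a' :: b' :: B) < Phi (A ++ a :: b :: B) := by
  have e1 : A ++ a :: b :: B = A ++ [a, b] ++ B := by simp
  have e2 : A ++ a' :: b' :: B = A ++ [a', b'] ++ B := by simp
  rw [e1, e2]
  have hC := cI_ctx [a, b] [a', b'] A B hc
  have hR := rI_ctx [a, b] [a', b'] A B hr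
  have hlen : (A ++ [a', b'] ++ B).length = (A ++ [a, b] ++ B).length := by simp
  have hbound : rI (A ++ [a', b'] ++ B) < (A ++ [a, b] ++ B).length ^ 2 := by
    rw [← hlen]
    exact inv2_lt_sq _ _ (by simp)
  unfold Phi
  rw [hlen]
  rcases hlt with h | ⟨h1, h2⟩
  · have hcc : cI (A ++ [a', b'] ++ B) + 1 ≤ cI (A ++ [a, b] ++ B) := by omega
    calc cI (A ++ [a', b'] ++ B) * (A ++ [a, b] ++ B).length ^ 2 + rI (A ++ [a', b'] ++ B)
        < cI (A ++ [a', b'] ++ B) * (A ++ [a, b] ++ B).length ^ 2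
            + (A ++ [a, b] ++ B).length ^ 2 := by omega
      _ = (cI (A ++ [a', b'] ++ B) + 1) * (A ++ [a, b] ++ B).length ^ 2 := by ring
      _ ≤ cI (A ++ [a, b] ++ B) * (A ++ [a, b] ++ B).length ^ 2 := Nat.mul_le_mul_right _ hcc
      _ ≤ _ := Nat.le_add_right _ _
  · have hcc : cI (A ++ [a', b'] ++ B) = cI (A ++ [a, b] ++ B) := by omega
    have hrr : rI (A ++ [a', b'] ++ B) < rI (A ++ [a, b] ++ B) := by omega
    rw [hcc]
    omega

lemma exists_bad {r : α → α → Prop} :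
    ∀ {L : List α}, ¬ L.Chain' r → ∃ A x y B, L = A ++ x :: y :: B ∧ ¬ r x y := by
  intro L
  induction L with
  | nil => intro h; exact absurd List.isChain_nil h
  | cons a t ih =>
    intro h
    cases t with
    | nil => exact absurd (List.isChain_singleton a) h
    | cons b t' =>
      simp only [List.Chain', List.isChain_cons_cons] at h
      by_cases hab : r a b
      · have h2 : ¬ (b :: t').Chain' r := fun hc => h ⟨hab, hc⟩
        obtain ⟨A, x, y, B, hEq, hxy⟩ := ih h2
        exact ⟨a :: A, x, y, B, by rw [List.cons_append, hEq], hxy⟩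
      · exact ⟨[], a, b, t', rfl, hab⟩



variable (k : Type) [Field k] (q : k) (m n : ℕ)

/-- generator image in the quotient -/
def xx (i : Fin m) (j : Fin n) : (I₁ k q m n).ringCon.Quotient :=
  ((X k q m n i j : QMat k q m n) : (I₁ k q m n).ringCon.Quotient)

/-- monomial image in the quotient -/
def yy (L : List (Fin m × Fin n)) : (I₁ k q m n).ringCon.Quotient :=
  ((matMono k q m n L : QMat k q m n) : (I₁ k q m n).ringCon.Quotient)

lemma yy_nil : yy k q m n [] = 1 := by
  simp [yy, matMono, RingCon.coe_one]

lemma yy_cons (p : Fin m × Fin n) (L : List (Fin m × Fin n)) :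
    yy k q m n (p :: L) = xx k q m n p.1 p.2 * yy k q m n L := by
  simp [yy, xx, matMono, RingCon.coe_mul]

lemma yy_append (L1 L2 : List (Fin m × Fin n)) :
    yy k q m n (L1 ++ L2) = yy k q m n L1 * yy k q m n L2 := by
  simp [yy, matMono, List.prod_append, RingCon.coe_mul]

lemma yy_mid (A B : List (Fin m × Fin n)) (a b : Fin m × Fin n) :
    yy k q m n (A ++ a :: b :: B)
      = yy k q m n A * (xx k q m n a.1 a.2 * xx k q m n b.1 b.2 * yy k q m n B) := by
  rw [yy_append, yy_cons, yy_cons, mul_assoc]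

/-- column relation in the quotient -/
lemma qcol {i l : Fin m} (j : Fin n) (h : i < l) :
    xx k q m n i j * xx k q m n l j = q • (xx k q m n l j * xx k q m n i j) := by
  have h1 : X k q m n i j * X k q m n l j = q • (X k q m n l j * X k q m n i j) := by
    have := RingQuot.mkAlgHom_rel k (MatRel.col (k := k) (q := q) (j := j) h)
    simpa [X, map_mul, map_smul] using this
  have := congrArg (fun z : QMat k q m n => (z : (I₁ k q m n).ringCon.Quotient)) h1
  simpa only [xx, RingCon.coe_mul, RingCon.coe_smul] using this

lemma qrow (i : Fin m) {j s : Fin n} (h : j < s) :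
    xx k q m n i j * xx k q m n i s = q • (xx k q m n i s * xx k q m n i j) := by
  have h1 : X k q m n i j * X k q m n i s = q • (X k q m n i s * X k q m n i j) := by
    have := RingQuot.mkAlgHom_rel k (MatRel.row (k := k) (q := q) (i := i) h)
    simpa [X, map_mul, map_smul] using this
  have := congrArg (fun z : QMat k q m n => (z : (I₁ k q m n).ringCon.Quotient)) h1
  simpa only [xx, RingCon.coe_mul, RingCon.coe_smul] using this

lemma qcomm {i l : Fin m} {j s : Fin n} (h1 : i < l) (h2 : j < s) :
    xx k q m n i s * xx k q m n l j = xx k q m n l j * xx k q m n i s := by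
  have h3 : X k q m n i s * X k q m n l j = X k q m n l j * X k q m n i s := by
    have := RingQuot.mkAlgHom_rel k (MatRel.comm (k := k) (q := q) h1 h2)
    simpa [X, map_mul] using this
  have := congrArg (fun z : QMat k q m n => (z : (I₁ k q m n).ringCon.Quotient)) h3
  simpa only [xx, RingCon.coe_mul] using this

lemma qmixed {i l : Fin m} {j s : Fin n} (h1 : i < l) (h2 : j < s) :
    xx k q m n i j * xx k q m n l s - xx k q m n l s * xx k q m n i j
      = (q - q⁻¹) • (xx k q m n i s * xx k q m n l j) := by
  have h3 : X k q m n i j * X k q m n l s - X k q m n l s * X k q m n i j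
      = (q - q⁻¹) • (X k q m n i s * X k q m n l j) := by
    have := RingQuot.mkAlgHom_rel k (MatRel.mixed (k := k) (q := q) h1 h2)
    simpa [X, map_mul, map_smul, map_sub] using this
  have := congrArg (fun z : QMat k q m n => (z : (I₁ k q m n).ringCon.Quotient)) h3
  simpa only [xx, RingCon.coe_mul, RingCon.coe_smul, RingCon.coe_sub] using this

lemma qminor {i l : Fin m} {j s : Fin n} (h1 : i < l) (h2 : j < s) :
    xx k q m n i j * xx k q m n l s = q • (xx k q m n i s * xx k q m n l j) := by
  have hmem : X k q m n i j * X k q m n l s - q • (X k q m n i s * X k q m n l j)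
      ∈ I₁ k q m n := TwoSidedIdeal.subset_span ⟨i, l, j, s, h1, h2, rfl⟩
  have h0 : ((X k q m n i j * X k q m n l s - q • (X k q m n i s * X k q m n l j) : QMat k q m n) :
      (I₁ k q m n).ringCon.Quotient) = ((0 : QMat k q m n) : (I₁ k q m n).ringCon.Quotient) := by
    refine (RingCon.eq _).2 ?_
    rw [TwoSidedIdeal.rel_iff]
    simpa using hmem
  rw [RingCon.coe_sub, RingCon.coe_zero, sub_eq_zero] at h0
  simpa only [xx, RingCon.coe_mul, RingCon.coe_smul] using h0


lemma RA (A B : List (Fin m × Fin n)) {i l : Fin m} (j : Fin n) (h : i < l) :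
    yy k q m n (A ++ (i, j) :: (l, j) :: B)
      = q • yy k q m n (A ++ (l, j) :: (i, j) :: B) := by
  rw [yy_mid, yy_mid]
  dsimp only
  rw [qcol k q m n j h, smul_mul_assoc, mul_smul_comm]

lemma RB (hq : q ≠ 0) (A B : List (Fin m × Fin n)) (i : Fin m) {j s : Fin n} (h : s < j) :
    yy k q m n (A ++ (i, j) :: (i, s) :: B)
      = q⁻¹ • yy k q m n (A ++ (i, s) :: (i, j) :: B) := by
  have h2 : q⁻¹ • (xx k q m n i s * xx k q m n i j) = xx k q m n i j * xx k q m n i s := by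
    rw [qrow k q m n i h, smul_smul, inv_mul_cancel₀ hq, one_smul]
  rw [yy_mid, yy_mid]
  dsimp only
  rw [← h2, smul_mul_assoc, mul_smul_comm]

lemma RC (A B : List (Fin m × Fin n)) {i l : Fin m} {j s : Fin n} (h1 : i < l) (h2 : s < j) :
    yy k q m n (A ++ (i, j) :: (l, s) :: B)
      = yy k q m n (A ++ (l, s) :: (i, j) :: B) := by
  rw [yy_mid, yy_mid]
  dsimp only
  rw [qcomm k q m n h1 h2]

lemma RD (A B : List (Fin m × Fin n)) {i l : Fin m} {j s : Fin n} (h1 : i < l) (h2 : j < s) :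
    yy k q m n (A ++ (i, j) :: (l, s) :: B)
      = q • yy k q m n (A ++ (l, j) :: (i, s) :: B) := by
  have e : xx k q m n i j * xx k q m n l s = q • (xx k q m n l j * xx k q m n i s) := by
    rw [qminor k q m n h1 h2, qcomm k q m n h1 h2]
  rw [yy_mid, yy_mid]
  dsimp only
  rw [e, smul_mul_assoc, mul_smul_comm]

lemma RE (A B : List (Fin m × Fin n)) {i l : Fin m} {j s : Fin n} (h1 : l < i) (h2 : s < j) :
    yy k q m n (A ++ (i, j) :: (l, s) :: B)
      = yy k q m n (A ++ (l, s) :: (i, j) :: B)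
        - (q - q⁻¹) • yy k q m n (A ++ (i, s) :: (l, j) :: B) := by
  have hm := qmixed k q m n (i := l) (l := i) (j := s) (s := j) h1 h2
  have hc := qcomm k q m n (i := l) (l := i) (j := s) (s := j) h1 h2
  have e : xx k q m n i j * xx k q m n l s
      = xx k q m n l s * xx k q m n i j
        - (q - q⁻¹) • (xx k q m n i s * xx k q m n l j) := by
    rw [← hc, ← hm]
    abel
  rw [yy_mid, yy_mid, yy_mid]
  dsimp only
  rw [e, sub_mul, mul_sub, smul_mul_assoc, mul_smul_comm]


lemma perm_swap {α : Type*} (x y : α) : ([x, y] : List α).Perm [y, x] :=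
  List.Perm.swap y x []

lemma part1 (hq : q ≠ 0) (L : List (Fin m × Fin n)) :
    yy k q m n L ∈ Submodule.span k
      {x : (I₁ k q m n).ringCon.Quotient |
        ∃ L' : List (Fin m × Fin n), OrderedIdx L' ∧ x = yy k q m n L'} := by
  have key : ∀ (N : ℕ) (L : List (Fin m × Fin n)), Phi L < N →
      yy k q m n L ∈ Submodule.span k
        {x : (I₁ k q m n).ringCon.Quotient |
          ∃ L' : List (Fin m × Fin n), OrderedIdx L' ∧ x = yy k q m n L'} := by
    intro N
    induction N with
    | zero => exact fun L h => absurd h (Nat.not_lt_zero _)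
    | succ N ih =>
      intro L hPhi
      by_cases hord : OrderedIdx L
      · exact Submodule.subset_span ⟨L, hord, rfl⟩
      · obtain ⟨A, a, b, B, rfl, hbad⟩ := exists_bad hord
        obtain ⟨i, j⟩ := a
        obtain ⟨l, s⟩ := b
        simp only [not_and_or, not_le] at hbad
        rcases lt_trichotomy i l with hil | rfl | hli
        · rcases lt_trichotomy j s with hjs | rfl | hsj
          · -- case (d): minor rewrite
            have hlt : Phi (A ++ (l, j) :: (i, s) :: B) < Phi (A ++ (i, j) :: (l, s) :: B) := by
              apply phi_lt
              · simpa using perm_swap i l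
              · simp
              · right
                constructor
                · rw [cI_pair, cI_pair]
                · rw [rI_pair, rI_pair]
                  simp [hil, asymm hil]
            rw [RD k q m n A B hil hjs]
            exact Submodule.smul_mem _ _ (ih _ (by omega))
          · -- case (a): column relation
            have hlt : Phi (A ++ (l, j) :: (i, j) :: B) < Phi (A ++ (i, j) :: (l, j) :: B) := by
              apply phi_lt
              · simpa using perm_swap i l
              · simp
              · right
                constructor
                · rw [cI_pair, cI_pair]
                · rw [rI_pair, rI_pair]
                  simp [hil, asymm hil]
            rw [RA k q m n A B j hil]
            exact Submodule.smul_mem _ _ (ih _ (by omega))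
          · -- case (c): commutation
            have hlt : Phi (A ++ (l, s) :: (i, j) :: B) < Phi (A ++ (i, j) :: (l, s) :: B) := by
              apply phi_lt
              · simpa using perm_swap i l
              · simpa using perm_swap j s
              · left
                rw [cI_pair, cI_pair]
                simp [hsj, asymm hsj]
            rw [RC k q m n A B hil hsj]
            exact ih _ (by omega)
        · -- case i = l: row relation, need s < j
          rcases hbad with h | hsj
          · exact absurd h (lt_irrefl _)
          · have hlt : Phi (A ++ (i, s) :: (i, j) :: B) < Phi (A ++ (i, j) :: (i, s) :: B) := by
              apply phi_lt
              · simp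
              · simpa using perm_swap j s
              · left
                rw [cI_pair, cI_pair]
                simp [hsj, asymm hsj]
            rw [RB k q m n hq A B i hsj]
            exact Submodule.smul_mem _ _ (ih _ (by omega))
        · -- case l < i: need s < j
          rcases hbad with h | hsj
          · exact absurd h (asymm hli)
          · have hlt1 : Phi (A ++ (l, s) :: (i, j) :: B) < Phi (A ++ (i, j) :: (l, s) :: B) := by
              apply phi_lt
              · simpa using perm_swap i l
              · simpa using perm_swap j s
              · left
                rw [cI_pair, cI_pair]
                simp [hsj, asymm hsj]
            have hlt2 : Phi (A ++ (i, s) :: (l, j) :: B) < Phi (A ++ (i, j) :: (l, s) :: B) := by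
              apply phi_lt
              · simp
              · simpa using perm_swap j s
              · left
                rw [cI_pair, cI_pair]
                simp [hsj, asymm hsj]
            rw [RE k q m n A B hli hsj]
            exact sub_mem (ih _ (by omega)) (Submodule.smul_mem _ _ (ih _ (by omega)))
  exact key (Phi L + 1) L (Nat.lt_succ_self _)

lemma spanAll_mul {u v : (I₁ k q m n).ringCon.Quotient}
    (hu : u ∈ Submodule.span k {x | ∃ L : List (Fin m × Fin n), x = yy k q m n L})
    (hv : v ∈ Submodule.span k {x | ∃ L : List (Fin m × Fin n), x = yy k q m n L}) :
    u * v ∈ Submodule.span k {x | ∃ L : List (Fin m × Fin n), x = yy k q m n L} := by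
  induction hu using Submodule.span_induction with
  | mem u hu =>
    obtain ⟨L, rfl⟩ := hu
    induction hv using Submodule.span_induction with
    | mem v hv =>
      obtain ⟨L', rfl⟩ := hv
      rw [← yy_append]
      exact Submodule.subset_span ⟨L ++ L', rfl⟩
    | zero => rw [mul_zero]; exact zero_mem _
    | add a b _ _ ha hb => rw [mul_add]; exact add_mem ha hb
    | smul c a _ ha => rw [mul_smul_comm]; exact Submodule.smul_mem _ _ ha
  | zero => rw [zero_mul]; exact zero_mem _
  | add a b _ _ ha hb => rw [add_mul]; exact add_mem ha hb
  | smul c a _ ha => rw [smul_mul_assoc]; exact Submodule.smul_mem _ _ ha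

lemma spanAll_top (w : QMat k q m n) :
    ((w : (I₁ k q m n).ringCon.Quotient)) ∈
      Submodule.span k {x | ∃ L : List (Fin m × Fin n), x = yy k q m n L} := by
  obtain ⟨u, rfl⟩ := RingQuot.mkAlgHom_surjective k (MatRel k q m n) w
  induction u using FreeAlgebra.induction with
  | grade0 r =>
    have h1 : (RingQuot.mkAlgHom k (MatRel k q m n)) (algebraMap k _ r)
        = r • (1 : QMat k q m n) := by
      rw [AlgHom.commutes, Algebra.algebraMap_eq_smul_one]
    rw [h1, RingCon.coe_smul]
    refine Submodule.smul_mem _ _ (Submodule.subset_span ⟨[], ?_⟩)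
    rw [yy_nil, RingCon.coe_one]
  | grade1 p =>
    refine Submodule.subset_span ⟨[p], ?_⟩
    rw [yy_cons, yy_nil, mul_one]
    rfl
  | add a b ha hb => rw [map_add, RingCon.coe_add]; exact add_mem ha hb
  | mul a b ha hb =>
    rw [map_mul, RingCon.coe_mul]
    exact spanAll_mul k q m n ha hb

end QMX

/-- Every monomial in the generators `X i j` is congruent modulo `I₁` to a
`k`-linear combination of ordered monomials; consequently the cosets of the ordered
monomials span `O_q(M_{m,n}(k))/I₁` as a `k`-vector space. -/
theorem orderedMono_span (k : Type) [Field k] (q : k) (hq : q ≠ 0) (m n : ℕ) :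
    (∀ L : List (Fin m × Fin n),
        ((matMono k q m n L : QMat k q m n) : (I₁ k q m n).ringCon.Quotient) ∈
          Submodule.span k
            { x : (I₁ k q m n).ringCon.Quotient |
              ∃ L' : List (Fin m × Fin n), OrderedIdx L' ∧ x = ((matMono k q m n L' : QMat k q m n) : (I₁ k q m n).ringCon.Quotient) }) ∧
      Submodule.span k
          { x : (I₁ k q m n).ringCon.Quotient |
            ∃ L' : List (Fin m × Fin n), OrderedIdx L' ∧ x = ((matMono k q m n L' : QMat k q m n) : (I₁ k q m n).ringCon.Quotient) } = ⊤ := by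
  constructor
  · exact fun L => QMX.part1 k q m n hq L
  · rw [eq_top_iff]
    rintro z -
    induction z using Quotient.inductionOn' with
    | h w =>
      have h1 : Quotient.mk'' w = ((w : QMat k q m n) : (I₁ k q m n).ringCon.Quotient) := rfl
      rw [h1]
      have h2 := QMX.spanAll_top k q m n w
      have h3 : Submodule.span k {x | ∃ L : List (Fin m × Fin n), x = QMX.yy k q m n L} ≤
          Submodule.span k
            { x : (I₁ k q m n).ringCon.Quotient |
              ∃ L' : List (Fin m × Fin n), OrderedIdx L' ∧
                x = ((matMono k q m n L' : QMat k q m n) : (I₁ k q m n).ringCon.Quotient) } := by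
        rw [Submodule.span_le]
        rintro x ⟨L, rfl⟩
        exact QMX.part1 k q m n hq L
      exact h3 h2
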